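/- The value function of a discounted POMDP with costs C(π,u) concave in π is concave in π: V(π) = min_u [C(π,u) + ρ Σ_y V(T(π,y,u)) σ(π,y,u)] is a concave function of π on the belief simplex. -/

import Mathlib

set_option linter.unusedVariables false
set_option linter.unusedSectionVars false
set_option maxHeartbeats 1000000


open scoped BigOperators

/-- A matrix is row-stochastic if all entries are nonnegative and each row sums to 1. -/
def RowStochastic {X Y : Type*} [Fintype Y] (B : Matrix X Y ℝ) : Prop :=
  (∀ i j, 0 ≤ B i j) ∧ ∀ i, ∑ j, B i j = 1

/-- Blackwell dominance: `B1 ⪰_B B2` iff `B2 = B1 * R` for some row-stochastic `R`. -/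
def Blackwell {X Y1 Y2 : Type*} [Fintype Y1] [Fintype Y2]
    (B1 : Matrix X Y1 ℝ) (B2 : Matrix X Y2 ℝ) : Prop :=
  ∃ R : Matrix Y1 Y2 ℝ, RowStochastic R ∧ B2 = B1 * R

/-- One-step predicted belief `(P'π)(x)`. -/
noncomputable def pred {X : Type*} [Fintype X] (P : Matrix X X ℝ) (b : X → ℝ) : X → ℝ :=
  fun x => ∑ x', b x' * P x' x

/-- Normalizing constant `σ(π,y) = 1' O_y P' π` of the Bayesian filter. -/
noncomputable def sigNorm {X Y : Type*} [Fintype X] (P : Matrix X X ℝ) (O : Matrix X Y ℝ)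
    (b : X → ℝ) (y : Y) : ℝ :=
  ∑ x, pred P b x * O x y

/-- Bayesian filter update `T(π,y) = O_y P' π / σ(π,y)`. -/
noncomputable def filt {X Y : Type*} [Fintype X] (P : Matrix X X ℝ) (O : Matrix X Y ℝ)
    (b : X → ℝ) (y : Y) : X → ℝ :=
  fun x => pred P b x * O x y / sigNorm P O b y

/-- The `Q`-function of the discounted POMDP. -/
noncomputable def Qval {X Y : Type*} [Fintype X] [Fintype Y] {m : ℕ}
    (P : Matrix X X ℝ) (O : Fin m → Matrix X Y ℝ)
    (C : (X → ℝ) → Fin m → ℝ) (ρ : ℝ) (V : (X → ℝ) → ℝ)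
    (b : X → ℝ) (u : Fin m) : ℝ :=
  C b u + ρ * ∑ y, sigNorm P (O u) b y * V (filt P (O u) b y)

section Helpers
variable {X Y : Type*} [Fintype X] [Fintype Y]

lemma pred_nonneg (P : Matrix X X ℝ) (hP : ∀ i j, 0 ≤ P i j) (b : X → ℝ)
    (hb : ∀ x, 0 ≤ b x) (x : X) : 0 ≤ pred P b x :=
  Finset.sum_nonneg fun _ _ => mul_nonneg (hb _) (hP _ _)

lemma pred_combo (P : Matrix X X ℝ) (a c : X → ℝ) (p q : ℝ) (x : X) :
    pred P (p • a + q • c) x = p * pred P a x + q * pred P c x := by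
  simp [pred, add_mul, Finset.sum_add_distrib, Finset.mul_sum, mul_assoc]

lemma sigNorm_nonneg (P : Matrix X X ℝ) (hP : ∀ i j, 0 ≤ P i j)
    (O : Matrix X Y ℝ) (hO : ∀ i j, 0 ≤ O i j) (b : X → ℝ) (hb : ∀ x, 0 ≤ b x) (y : Y) :
    0 ≤ sigNorm P O b y :=
  Finset.sum_nonneg fun _ _ => mul_nonneg (pred_nonneg P hP b hb _) (hO _ _)

lemma sigNorm_combo (P : Matrix X X ℝ) (O : Matrix X Y ℝ) (a c : X → ℝ) (p q : ℝ) (y : Y) :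
    sigNorm P O (p • a + q • c) y = p * sigNorm P O a y + q * sigNorm P O c y := by
  simp [sigNorm, pred_combo, add_mul, Finset.sum_add_distrib, Finset.mul_sum, mul_assoc]

lemma sum_pred (P : Matrix X X ℝ) (hP : ∀ i, ∑ j, P i j = 1) (b : X → ℝ)
    (hb : ∑ x, b x = 1) : ∑ x, pred P b x = 1 := by
  unfold pred
  rw [Finset.sum_comm]
  simp [← Finset.mul_sum, hP, hb]

lemma sum_sigNorm (P : Matrix X X ℝ) (hP : ∀ i, ∑ j, P i j = 1)
    (O : Matrix X Y ℝ) (hO : ∀ i, ∑ j, O i j = 1) (b : X → ℝ) (hb : ∑ x, b x = 1) :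
    ∑ y, sigNorm P O b y = 1 := by
  unfold sigNorm
  rw [Finset.sum_comm]
  simp [← Finset.mul_sum, hO]
  exact sum_pred P hP b hb

lemma sig_filt (P : Matrix X X ℝ) (hP : ∀ i j, 0 ≤ P i j)
    (O : Matrix X Y ℝ) (hO : ∀ i j, 0 ≤ O i j)
    (b : X → ℝ) (hb : ∀ x, 0 ≤ b x) (y : Y) (x : X) :
    sigNorm P O b y * filt P O b y x = pred P b x * O x y := by
  rcases (sigNorm_nonneg P hP O hO b hb y).eq_or_lt with h | h
  · have h0 : pred P b x * O x y = 0 := by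
      have := (Finset.sum_eq_zero_iff_of_nonneg
        (fun i _ => mul_nonneg (pred_nonneg P hP b hb i) (hO i y))).1 h.symm
      exact this x (Finset.mem_univ x)
    rw [h0, ← h, zero_mul]
  · rw [filt, mul_div_cancel₀ _ h.ne']

lemma filt_mem (P : Matrix X X ℝ) (hP : ∀ i j, 0 ≤ P i j)
    (O : Matrix X Y ℝ) (hO : ∀ i j, 0 ≤ O i j)
    (b : X → ℝ) (hb : ∀ x, 0 ≤ b x) (y : Y) (hσ : 0 < sigNorm P O b y) :
    filt P O b y ∈ stdSimplex ℝ X := by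
  constructor
  · intro x
    exact div_nonneg (mul_nonneg (pred_nonneg P hP b hb x) (hO x y)) hσ.le
  · show ∑ x, filt P O b y x = 1
    unfold filt
    rw [← Finset.sum_div, div_eq_one_iff_eq hσ.ne']
    rfl

lemma filt_combo (P : Matrix X X ℝ) (hP : ∀ i j, 0 ≤ P i j)
    (O : Matrix X Y ℝ) (hO : ∀ i j, 0 ≤ O i j)
    (a c : X → ℝ) (ha : ∀ x, 0 ≤ a x) (hc : ∀ x, 0 ≤ c x) (p q : ℝ) (y : Y)
    (hσ : sigNorm P O (p • a + q • c) y ≠ 0) :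
    filt P O (p • a + q • c) y =
      ((p * sigNorm P O a y) / sigNorm P O (p • a + q • c) y) • filt P O a y
      + ((q * sigNorm P O c y) / sigNorm P O (p • a + q • c) y) • filt P O c y := by
  funext x
  have h1 := sig_filt P hP O hO a ha y x
  have h2 := sig_filt P hP O hO c hc y x
  show filt P O (p • a + q • c) y x = _ * filt P O a y x + _ * filt P O c y x
  rw [filt, pred_combo, div_mul_eq_mul_div, div_mul_eq_mul_div, ← add_div,
    mul_assoc, mul_assoc, h1, h2]
  ring_nf

end Helpers

/-- The value function of a discounted POMDP with costs concave in the belief is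
concave in the belief: any bounded solution `V` of Bellman's equation
`V(π) = min_u [C(π,u) + ρ ∑_y V(T(π,y,u)) σ(π,y,u)]` is concave on the simplex. -/
theorem value_function_concave {X Y : Type*} [Fintype X] [Fintype Y] {m : ℕ} [NeZero m]
    (P : Matrix X X ℝ) (hP : RowStochastic P)
    (O : Fin m → Matrix X Y ℝ) (hO : ∀ u, RowStochastic (O u))
    (C : (X → ℝ) → Fin m → ℝ)
    (hC : ∀ u, ConcaveOn ℝ (stdSimplex ℝ X) (fun b => C b u))
    (hCbdd : ∃ M : ℝ, ∀ b ∈ stdSimplex ℝ X, ∀ u, |C b u| ≤ M)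
    (ρ : ℝ) (hρ0 : 0 ≤ ρ) (hρ1 : ρ < 1)
    (V : (X → ℝ) → ℝ)
    (hVbdd : ∃ M : ℝ, ∀ b ∈ stdSimplex ℝ X, |V b| ≤ M)
    (hBellman : ∀ b ∈ stdSimplex ℝ X,
      IsLeast {v : ℝ | ∃ u : Fin m, v = Qval P O C ρ V b u} (V b)) :
    ConcaveOn ℝ (stdSimplex ℝ X) V := by
  obtain ⟨M, hM⟩ := hVbdd
  -- the set of "concavity defects" of V on the simplex
  set S : Set ℝ := {v : ℝ | ∃ a ∈ stdSimplex ℝ X, ∃ c ∈ stdSimplex ℝ X, ∃ p q : ℝ,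
      0 ≤ p ∧ 0 ≤ q ∧ p + q = 1 ∧ v = V (p • a + q • c) - (p * V a + q * V c)} with hS
  set d : ℝ := sInf S with hd
  have hbdd : BddBelow S := by
    refine ⟨-(2 * M), ?_⟩
    rintro v ⟨a, ha, c, hc, p, q, hp, hq, hpq, rfl⟩
    have hb : p • a + q • c ∈ stdSimplex ℝ X := (convex_stdSimplex ℝ X) ha hc hp hq hpq
    have h1 := abs_le.1 (hM _ hb)
    have h2 := abs_le.1 (hM a ha)
    have h3 := abs_le.1 (hM c hc)
    nlinarith [mul_le_mul_of_nonneg_left h2.2 hp, mul_le_mul_of_nonneg_left h3.2 hq]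
  refine ⟨convex_stdSimplex ℝ X, ?_⟩
  intro x hx z hz t s ht hs hts
  have hmemS : ∀ a ∈ stdSimplex ℝ X, ∀ c ∈ stdSimplex ℝ X, ∀ p q : ℝ,
      0 ≤ p → 0 ≤ q → p + q = 1 →
      V (p • a + q • c) - (p * V a + q * V c) ∈ S :=
    fun a ha c hc p q hp hq hpq => ⟨a, ha, c, hc, p, q, hp, hq, hpq, rfl⟩
  have hd0 : d ≤ 0 := by
    have h0 : (0 : ℝ) ∈ S := by
      have := hmemS x hx x hx 1 0 zero_le_one le_rfl (by norm_num)
      simpa using this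
    exact csInf_le hbdd h0
  -- key contraction step: every defect is at least ρ * d
  have hkey : ∀ v ∈ S, ρ * d ≤ v := by
    rintro v ⟨a, ha, c, hc, p, q, hp, hq, hpq, rfl⟩
    have hb : p • a + q • c ∈ stdSimplex ℝ X := (convex_stdSimplex ℝ X) ha hc hp hq hpq
    obtain ⟨⟨u, hVb⟩, hlb⟩ := hBellman _ hb
    have hVa : V a ≤ Qval P O C ρ V a u := (hBellman a ha).2 ⟨u, rfl⟩
    have hVc : V c ≤ Qval P O C ρ V c u := (hBellman c hc).2 ⟨u, rfl⟩
    have hCc : p * C a u + q * C c u ≤ C (p • a + q • c) u := by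
      have := (hC u).2 ha hc hp hq hpq
      simpa [smul_eq_mul] using this
    -- per-observation inequality
    have hy : ∀ y : Y,
        p * sigNorm P (O u) a y * V (filt P (O u) a y)
        + q * sigNorm P (O u) c y * V (filt P (O u) c y)
        + sigNorm P (O u) (p • a + q • c) y * d
        ≤ sigNorm P (O u) (p • a + q • c) y * V (filt P (O u) (p • a + q • c) y) := by
      intro y
      have hσa : 0 ≤ sigNorm P (O u) a y :=
        sigNorm_nonneg P hP.1 (O u) (hO u).1 a ha.1 y
      have hσc : 0 ≤ sigNorm P (O u) c y :=
        sigNorm_nonneg P hP.1 (O u) (hO u).1 c hc.1 y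
      have hσbc : sigNorm P (O u) (p • a + q • c) y
          = p * sigNorm P (O u) a y + q * sigNorm P (O u) c y :=
        sigNorm_combo P (O u) a c p q y
      rcases (sigNorm_nonneg P hP.1 (O u) (hO u).1 (p • a + q • c)
          (hb.1) y).eq_or_lt with hσb0 | hσb
      · -- σ(b,y) = 0 : everything vanishes
        have hpa : p * sigNorm P (O u) a y = 0 := by
          nlinarith [mul_nonneg hp hσa, mul_nonneg hq hσc]
        have hqc : q * sigNorm P (O u) c y = 0 := by
          nlinarith [mul_nonneg hp hσa, mul_nonneg hq hσc]
        rw [hpa, hqc, ← hσb0, zero_mul, zero_mul, zero_mul, zero_mul]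
        norm_num
      · have hcombo := filt_combo P hP.1 (O u) (hO u).1 a c ha.1 hc.1 p q y hσb.ne'
        rcases (mul_nonneg hp hσa).eq_or_lt with hpa | hpa
        · -- coefficient on a vanishes; filter equals filter of c
          have hσbq : sigNorm P (O u) (p • a + q • c) y = q * sigNorm P (O u) c y := by
            rw [hσbc, ← hpa, zero_add]
          have hfe : filt P (O u) (p • a + q • c) y = filt P (O u) c y := by
            rw [hcombo, ← hpa, ← hσbq, zero_div, zero_smul, zero_add,
              div_self hσb.ne', one_smul]
          rw [hfe, ← hpa, zero_mul, zero_add, hσbq]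
          nlinarith [mul_nonneg hq hσc]
        rcases (mul_nonneg hq hσc).eq_or_lt with hqc | hqc
        · have hσbp : sigNorm P (O u) (p • a + q • c) y = p * sigNorm P (O u) a y := by
            rw [hσbc, ← hqc, add_zero]
          have hfe : filt P (O u) (p • a + q • c) y = filt P (O u) a y := by
            rw [hcombo, ← hqc, ← hσbp, zero_div, zero_smul, add_zero,
              div_self hσb.ne', one_smul]
          rw [hfe, ← hqc, zero_mul, add_zero, hσbp]
          nlinarith [mul_nonneg hp hσa]
        · -- both coefficients positive: use the definition of d
          have hσa' : 0 < sigNorm P (O u) a y := by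
            rcases hσa.eq_or_lt with h | h
            · exfalso; rw [← h, mul_zero] at hpa; exact lt_irrefl 0 hpa
            · exact h
          have hσc' : 0 < sigNorm P (O u) c y := by
            rcases hσc.eq_or_lt with h | h
            · exfalso; rw [← h, mul_zero] at hqc; exact lt_irrefl 0 hqc
            · exact h
          have hamem := filt_mem P hP.1 (O u) (hO u).1 a ha.1 y hσa'
          have hcmem := filt_mem P hP.1 (O u) (hO u).1 c hc.1 y hσc'
          set σb := sigNorm P (O u) (p • a + q • c) y with hσbdef
          set lam := p * sigNorm P (O u) a y / σb with hlam
          set mu := q * sigNorm P (O u) c y / σb with hmu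
          have hlam0 : 0 ≤ lam := div_nonneg hpa.le hσb.le
          have hmu0 : 0 ≤ mu := div_nonneg hqc.le hσb.le
          have hlm : lam + mu = 1 := by
            rw [hlam, hmu, ← add_div, ← hσbc, div_self hσb.ne']
          have hdle : d ≤ V (lam • filt P (O u) a y + mu • filt P (O u) c y)
              - (lam * V (filt P (O u) a y) + mu * V (filt P (O u) c y)) :=
            csInf_le hbdd (hmemS _ hamem _ hcmem lam mu hlam0 hmu0 hlm)
          rw [← hcombo] at hdle
          have e1 : σb * lam = p * sigNorm P (O u) a y := by
            rw [hlam]; field_simp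
          have e2 : σb * mu = q * sigNorm P (O u) c y := by
            rw [hmu]; field_simp
          have hh := mul_le_mul_of_nonneg_left hdle hσb.le
          have expand : σb * (V (filt P (O u) (p • a + q • c) y)
              - (lam * V (filt P (O u) a y) + mu * V (filt P (O u) c y)))
              = σb * V (filt P (O u) (p • a + q • c) y)
                - σb * lam * V (filt P (O u) a y)
                - σb * mu * V (filt P (O u) c y) := by ring
          rw [expand, e1, e2] at hh
          linarith [hh]
    -- sum the per-observation inequalities
    have hsum1 : ∑ y, sigNorm P (O u) (p • a + q • c) y = 1 :=
      sum_sigNorm P hP.2 (O u) (hO u).2 _ hb.2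
    have hsum : p * (∑ y, sigNorm P (O u) a y * V (filt P (O u) a y))
        + q * (∑ y, sigNorm P (O u) c y * V (filt P (O u) c y)) + d
        ≤ ∑ y, sigNorm P (O u) (p • a + q • c) y
            * V (filt P (O u) (p • a + q • c) y) := by
      have := Finset.sum_le_sum (fun y (_ : y ∈ Finset.univ) => hy y)
      rw [Finset.sum_add_distrib, Finset.sum_add_distrib, ← Finset.sum_mul,
        hsum1, one_mul] at this
      calc p * (∑ y, sigNorm P (O u) a y * V (filt P (O u) a y))
            + q * (∑ y, sigNorm P (O u) c y * V (filt P (O u) c y)) + d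
          = (∑ y, p * sigNorm P (O u) a y * V (filt P (O u) a y))
            + (∑ y, q * sigNorm P (O u) c y * V (filt P (O u) c y)) + d := by
            rw [Finset.mul_sum, Finset.mul_sum]
            ring_nf
        _ ≤ _ := this
    rw [hVb]
    rw [Qval] at hVa hVc ⊢
    nlinarith [mul_le_mul_of_nonneg_left hVa hp, mul_le_mul_of_nonneg_left hVc hq,
      mul_le_mul_of_nonneg_left hsum hρ0]
  -- contraction: d ≥ ρ d, hence d ≥ 0
  have hdd : ρ * d ≤ d := le_csInf ⟨0, by
      have := hmemS x hx x hx 1 0 zero_le_one le_rfl (by norm_num)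
      simpa using this⟩ hkey
  have hdnn : 0 ≤ d := by nlinarith
  have hfin := hkey _ (hmemS x hx z hz t s ht hs hts)
  have : 0 ≤ V (t • x + s • z) - (t * V x + s * V z) := by nlinarith
  simpa [smul_eq_mul] using by linarith [this]
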